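/- Let G = (M, V, E) be a constraint graph admitting an M-covering matching, suppose q ≥ n, and let k be any integer with k_sys ≤ k ≤ n. Then the [n, k] Reed–Solomon code over F_q with any defining set of n distinct elements of F_q contains a subcode generated by a valid generator matrix for G in systematic form; this subcode has dimension s and minimum distance at least n − k + 1. -/

import Mathlib

/-- An `M`-covering matching of the constraint graph: an injection `jm` assigning
to each message vertex a distinct adjacent code vertex. -/
def IsMatching {s n : ℕ} (E : Fin s → Fin n → Prop) (jm : Fin s → Fin n) : Prop :=
  Function.Injective jm ∧ ∀ i : Fin s, E i (jm i)

/-- The entry `(i, l)` of the matched adjacency matrix `A_Ẽ` is nonzero iff either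
`l = jm i`, or `l` is unmatched and `(m_i, c_l) ∈ E`. -/
def MatchedAdj {s n : ℕ} (E : Fin s → Fin n → Prop) (jm : Fin s → Fin n)
    (i : Fin s) (l : Fin n) : Prop :=
  l = jm i ∨ (l ∉ Finset.image jm Finset.univ ∧ E i l)

instance {s n : ℕ} (E : Fin s → Fin n → Prop) [∀ i j, Decidable (E i j)]
    (jm : Fin s → Fin n) (i : Fin s) (l : Fin n) : Decidable (MatchedAdj E jm i l) := by
  unfold MatchedAdj; infer_instance

/-- `k_Ẽ = z_Ẽ + 1`, where `z_Ẽ` is the maximum number of zeros in any row of the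
matched adjacency matrix `A_Ẽ`. -/
def kMatch {s n : ℕ} (E : Fin s → Fin n → Prop) [∀ i j, Decidable (E i j)]
    (jm : Fin s → Fin n) : ℕ :=
  (Finset.univ.sup fun i : Fin s =>
    (Finset.univ.filter fun l : Fin n => ¬ MatchedAdj E jm i l).card) + 1

/-- The `[n, k]` Reed–Solomon code over `F` with defining set `α 1, …, α n`:
evaluations of polynomials of degree `< k` at the points `α j`. -/
def RSCode {n : ℕ} (F : Type*) [Field F] (k : ℕ) (α : Fin n → F) :
    Set (Fin n → F) :=
  {c | ∃ p : Polynomial F, p.degree < (k : WithBot ℕ) ∧ c = fun j => p.eval (α j)}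

/-- Let `G = (M, V, E)` be a constraint graph admitting an
`M`-covering matching, `q ≥ n`, and let `k_sys ≤ k ≤ n`.  Then the `[n, k]`
Reed–Solomon code with any defining set of `n` distinct elements of `F_q`
contains a subcode generated by a valid generator matrix for `G` in systematic
form; this subcode has dimension `s` (the encoding map is injective) and minimum
distance at least `n − k + 1`. -/
theorem RS_contains_systematic_valid_subcode
    {s n : ℕ} {F : Type*} [Field F] [Fintype F] [DecidableEq F]
    (hsn : s ≤ n) (hq : n ≤ Fintype.card F)
    (E : Fin s → Fin n → Prop) [∀ i j, Decidable (E i j)]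
    (α : Fin n → F) (hα : Function.Injective α)
    (jm0 : Fin s → Fin n) (hjm0 : IsMatching E jm0)
    (ksys : ℕ)
    (hksys : IsLeast {k' : ℕ | ∃ jm : Fin s → Fin n,
      IsMatching E jm ∧ k' = kMatch E jm} ksys)
    (k : ℕ) (hk1 : ksys ≤ k) (hk2 : k ≤ n) :
    ∃ G' : Matrix (Fin s) (Fin n) F,
      (∀ i j, ¬ E i j → G' i j = 0) ∧
      (∃ jm : Fin s → Fin n, Function.Injective jm ∧
        ∀ i i' : Fin s, G' i' (jm i) = if i' = i then 1 else 0) ∧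
      (∀ i : Fin s, G' i ∈ RSCode F k α) ∧
      Function.Injective (fun m : Fin s → F => Matrix.vecMul m G') ∧
      (∀ x y : Fin n → F,
        (∃ m : Fin s → F, x = Matrix.vecMul m G') →
        (∃ m : Fin s → F, y = Matrix.vecMul m G') →
        x ≠ y → n - k + 1 ≤ hammingDist x y) := by
  classical
  obtain ⟨⟨jm, ⟨hinj, hEjm⟩, hks⟩, -⟩ := hksys
  set Z : Fin s → Finset (Fin n) :=
    fun i => Finset.univ.filter fun l => ¬ MatchedAdj E jm i l with hZdef
  have hcard : ∀ i, (Z i).card < k := by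
    intro i
    have h1 : (Z i).card ≤ Finset.univ.sup fun i : Fin s =>
        (Finset.univ.filter fun l : Fin n => ¬ MatchedAdj E jm i l).card :=
      Finset.le_sup (f := fun i : Fin s =>
        (Finset.univ.filter fun l : Fin n => ¬ MatchedAdj E jm i l).card)
        (Finset.mem_univ i)
    have h2 : ksys = (Finset.univ.sup fun i : Fin s =>
        (Finset.univ.filter fun l : Fin n => ¬ MatchedAdj E jm i l).card) + 1 := hks
    omega
  set q : Fin s → Polynomial F :=
    fun i => ∏ l ∈ Z i, (Polynomial.X - Polynomial.C (α l)) with hqdef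
  have hCle : ∀ (c : F) (r : Polynomial F), (Polynomial.C c * r).degree ≤ r.degree := by
    intro c r
    calc (Polynomial.C c * r).degree ≤ (Polynomial.C c).degree + r.degree :=
          Polynomial.degree_mul_le _ _
      _ ≤ 0 + r.degree := add_le_add Polynomial.degree_C_le le_rfl
      _ = r.degree := zero_add _
  have hqdeg : ∀ i, (q i).degree < (k : WithBot ℕ) := by
    intro i
    refine lt_of_le_of_lt (Polynomial.degree_le_natDegree) ?_
    have hnd : (q i).natDegree = (Z i).card := by
      rw [hqdef]
      rw [Polynomial.natDegree_prod_of_monic _ _ (fun l _ => Polynomial.monic_X_sub_C _)]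
      simp [Polynomial.natDegree_X_sub_C]
    rw [hnd]
    exact_mod_cast hcard i
  have hjmZ : ∀ i, jm i ∉ Z i := by
    intro i
    simp [hZdef, MatchedAdj]
  have heval0 : ∀ i l, l ∈ Z i → (q i).eval (α l) = 0 := by
    intro i l hl
    rw [hqdef]
    simp only [Polynomial.eval_prod]
    exact Finset.prod_eq_zero hl (by simp)
  have hne : ∀ i, (q i).eval (α (jm i)) ≠ 0 := by
    intro i
    rw [hqdef]
    simp only [Polynomial.eval_prod]
    refine Finset.prod_ne_zero_iff.2 fun l hl => ?_
    simp only [Polynomial.eval_sub, Polynomial.eval_X, Polynomial.eval_C]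
    intro h
    exact hjmZ i (by rwa [hα (sub_eq_zero.mp h)] )
  set p : Fin s → Polynomial F :=
    fun i => Polynomial.C ((q i).eval (α (jm i)))⁻¹ * q i with hpdef
  have hpdeg : ∀ i, (p i).degree < (k : WithBot ℕ) :=
    fun i => lt_of_le_of_lt (hCle _ _) (hqdeg i)
  have hp0 : ∀ i l, l ∈ Z i → (p i).eval (α l) = 0 := by
    intro i l hl
    simp [hpdef, heval0 i l hl]
  have hp1 : ∀ i, (p i).eval (α (jm i)) = 1 := by
    intro i
    simp [hpdef, inv_mul_cancel₀ (hne i)]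
  refine ⟨Matrix.of fun i l => (p i).eval (α l), ?_, ?_, ?_, ?_, ?_⟩
  case _ =>
    intro i j hEij
    have hj : j ∈ Z i := by
      simp only [hZdef, Finset.mem_filter, Finset.mem_univ, true_and]
      simp only [MatchedAdj]
      push_neg
      refine ⟨fun hj => hEij (hj ▸ hEjm i), fun _ => hEij⟩
    exact hp0 i j hj
  case _ =>
    refine ⟨jm, hinj, fun i i' => ?_⟩
    by_cases h : i' = i
    · subst h; simp [hp1 i']
    · have hj : jm i ∈ Z i' := by
        simp only [hZdef, Finset.mem_filter, Finset.mem_univ, true_and]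
        simp only [MatchedAdj]
        push_neg
        refine ⟨fun hj => h (hinj hj).symm, fun hmem =>
          absurd (Finset.mem_image_of_mem jm (Finset.mem_univ i)) hmem⟩
      simp [h, hp0 i' _ hj]
  case _ =>
    intro i
    exact ⟨p i, hpdeg i, rfl⟩
  case _ =>
    have key : ∀ (m : Fin s → F) (i : Fin s),
        Matrix.vecMul m (Matrix.of fun i l => (p i).eval (α l)) (jm i) = m i := by
      intro m i
      simp only [Matrix.vecMul, dotProduct, Matrix.of_apply]
      rw [Finset.sum_eq_single i]
      · simp [hp1 i]
      · intro i' _ hi'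
        simp [hp0 i' _ (by
          simp only [hZdef, Finset.mem_filter, Finset.mem_univ, true_and]
          simp only [MatchedAdj]
          push_neg
          exact ⟨fun hj => hi' (hinj hj).symm, fun hmem =>
            absurd (Finset.mem_image_of_mem jm (Finset.mem_univ i)) hmem⟩)]
      · simp
    intro m m' h
    funext i
    have := congrFun h (jm i)
    simpa [key] using this
  case _ =>
    have hvec : ∀ (m : Fin s → F) (l : Fin n),
        Matrix.vecMul m (Matrix.of fun i l => (p i).eval (α l)) l
          = (∑ i, Polynomial.C (m i) * p i).eval (α l) := by
      intro m l
      simp [Matrix.vecMul, dotProduct, Polynomial.eval_finset_sum]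
    rintro x y ⟨m, rfl⟩ ⟨m', rfl⟩ hxy
    set P : Polynomial F := ∑ i, Polynomial.C (m i - m' i) * p i with hPdef
    have hPdeg : P.degree < (k : WithBot ℕ) := by
      refine lt_of_le_of_lt (Polynomial.degree_sum_le _ _) ?_
      refine (Finset.sup_lt_iff (WithBot.bot_lt_coe k)).2 fun i _ => ?_
      exact lt_of_le_of_lt (hCle _ _) (hpdeg i)
    have heq : ∀ l : Fin n,
        Matrix.vecMul m (Matrix.of fun i l => (p i).eval (α l)) l
          - Matrix.vecMul m' (Matrix.of fun i l => (p i).eval (α l)) l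
          = P.eval (α l) := by
      intro l
      rw [hvec m l, hvec m' l, hPdef]
      simp [Polynomial.eval_finset_sum, sub_mul, Finset.sum_sub_distrib]
    have hP0 : P ≠ 0 := by
      intro hP
      apply hxy
      funext l
      have := heq l
      rw [hP] at this
      simpa [sub_eq_zero] using this
    have hnd : P.natDegree < k := (Polynomial.natDegree_lt_iff_degree_lt hP0).2 hPdeg
    set x := Matrix.vecMul m (Matrix.of fun i l => (p i).eval (α l)) with hxdef
    set y := Matrix.vecMul m' (Matrix.of fun i l => (p i).eval (α l)) with hydef
    have hroots : (Finset.univ.filter fun j : Fin n => x j = y j).card ≤ P.natDegree := by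
      refine le_trans (Finset.card_le_card_of_injOn (t := P.roots.toFinset) α (fun j hj => ?_) (hα.injOn)) ?_
      · simp only [Finset.mem_coe, Finset.mem_filter, Finset.mem_univ, true_and] at hj
        rw [Finset.mem_coe, Multiset.mem_toFinset, Polynomial.mem_roots hP0]
        have hz := heq j
        rw [hj, sub_self] at hz
        exact hz.symm
      · exact le_trans (Multiset.toFinset_card_le _) (Polynomial.card_roots' P)
    have hsplit : (Finset.univ.filter fun j : Fin n => x j = y j).card
        + (Finset.univ.filter fun j : Fin n => ¬ x j = y j).card = n := by
      rw [Finset.card_filter_add_card_filter_not]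
      simp
    have hdist : hammingDist x y
        = (Finset.univ.filter fun j : Fin n => ¬ x j = y j).card := by
      simp [hammingDist, ne_eq]
    omega
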